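/- arXiv:1509.01108 — 7 statements merged into one kernel-verified Lean document; each statement's English description precedes it below -/
import Mathlib

section
/- Every characterized subgroup of a topological abelian group X has index at most the cardinality of the continuum: if H = s_v(X) for a sequence v of characters of X, then [X : H] ≤ 𝔠. -/
open Filter Topology

abbrev 𝕋 : Type := AddCircle (1 : ℝ)

/-- Every characterized subgroup has index at most the continuum. -/
theorem characterized_index_le_continuum (X : Type) [AddCommGroup X] [TopologicalSpace X]
    [IsTopologicalAddGroup X] (v : ℕ → ContinuousAddMonoidHom X 𝕋) (H : AddSubgroup X)
    (hH : (H : Set X) = {x : X | Tendsto (fun n => v n x) atTop (𝓝 0)}) :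
    Cardinal.mk (X ⧸ H) ≤ Cardinal.continuum := by
  -- the subgroup of null sequences in ℕ → 𝕋
  set S : AddSubgroup (ℕ → 𝕋) :=
    { carrier := {t | Tendsto t atTop (𝓝 (0 : 𝕋))}
      zero_mem' := tendsto_const_nhds
      add_mem' := fun ha hb => by have := ha.add hb; rw [add_zero] at this; exact this
      neg_mem' := fun ha => by have := ha.neg; rw [neg_zero] at this; exact this } with hS
  set g : X →+ (ℕ → 𝕋) :=
    { toFun := fun x n => v n x
      map_zero' := by ext n; simp
      map_add' := fun a b => by ext n; simp } with hg
  have hHg : H = S.comap g := by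
    ext x
    have hx := Set.ext_iff.mp hH x
    exact hx
  have hle : H ≤ S.comap g := le_of_eq hHg
  -- the induced map on quotients
  let φ : X ⧸ H → (ℕ → 𝕋) ⧸ S :=
    Quotient.lift (fun x => QuotientAddGroup.mk (g x)) (by
      intro a b hab
      have : -a + b ∈ H := QuotientAddGroup.leftRel_apply.mp hab
      rw [hHg, AddSubgroup.mem_comap] at this
      refine Quotient.sound (QuotientAddGroup.leftRel_apply.mpr ?_)
      simpa using this)
  have hinj : Function.Injective φ := by
    intro a b
    refine Quotient.inductionOn₂ a b ?_
    intro x y h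
    have h' : -g x + g y ∈ S := QuotientAddGroup.leftRel_apply.mp (Quotient.exact h)
    refine Quotient.sound (QuotientAddGroup.leftRel_apply.mpr ?_)
    rw [hHg, AddSubgroup.mem_comap]
    simpa using h'
  calc Cardinal.mk (X ⧸ H) ≤ Cardinal.mk ((ℕ → 𝕋) ⧸ S) := Cardinal.mk_le_of_injective hinj
    _ ≤ Cardinal.mk (ℕ → 𝕋) := Cardinal.mk_quotient_le
    _ ≤ Cardinal.continuum := by
        have h𝕋 : Cardinal.mk 𝕋 ≤ Cardinal.continuum := by
          calc Cardinal.mk 𝕋 ≤ Cardinal.mk ℝ := Cardinal.mk_quotient_le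
            _ = Cardinal.continuum := Cardinal.mk_real
        calc Cardinal.mk (ℕ → 𝕋) = Cardinal.mk 𝕋 ^ Cardinal.mk ℕ := by
              rw [Cardinal.mk_arrow]; simp
          _ ≤ Cardinal.continuum ^ Cardinal.mk ℕ := by
              exact Cardinal.power_le_power_right h𝕋
          _ = Cardinal.continuum := by
              rw [Cardinal.mk_nat, Cardinal.continuum_power_aleph0]
end

section
/- Let X be a topological abelian group, F a closed subgroup of X, and π : X → X/F the canonical projection. If H is a characterized subgroup of X/F, then π^{-1}(H) is a characterized subgroup of X. -/
open Filter Topology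

/-- Preimages of characterized subgroups of quotients are characterized. -/
theorem preimage_characterized (X : Type) [AddCommGroup X] [TopologicalSpace X]
    [IsTopologicalAddGroup X] (F : AddSubgroup X) (hF : IsClosed (F : Set X))
    (H : AddSubgroup (X ⧸ F))
    (hH : ∃ u : ℕ → ContinuousAddMonoidHom (X ⧸ F) 𝕋,
      ∀ y : X ⧸ F, y ∈ H ↔ Tendsto (fun n => u n y) atTop (𝓝 0)) :
    ∃ v : ℕ → ContinuousAddMonoidHom X 𝕋,
      ∀ x : X, x ∈ H.comap (QuotientAddGroup.mk' F) ↔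
        Tendsto (fun n => v n x) atTop (𝓝 0) := by
  obtain ⟨u, hu⟩ := hH
  refine ⟨fun n => (u n).comp ⟨QuotientAddGroup.mk' F, continuous_quot_mk⟩, fun x => ?_⟩
  exact hu (QuotientAddGroup.mk' F x)
end

section
/- Let X be a compact abelian group and v a sequence of characters of X. If s_v(X) = X, then v is eventually null (v_n = 0 for all sufficiently large n). -/
open Filter Topology
open MeasureTheory Complex

/-- If `s_v(X) = X` for a compact abelian group `X`, then `v` is eventually null. -/
theorem compact_sv_eq_top_eventually_null (X : Type) [AddCommGroup X] [TopologicalSpace X]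
    [IsTopologicalAddGroup X] [CompactSpace X] [T2Space X]
    (v : ℕ → ContinuousAddMonoidHom X 𝕋)
    (h : ∀ x : X, Tendsto (fun n => v n x) atTop (𝓝 0)) :
    ∃ N : ℕ, ∀ n ≥ N, v n = 0 := by
  borelize X
  set μ : Measure X := Measure.addHaarMeasure ⟨⟨Set.univ, isCompact_univ⟩, by simp⟩ with hμdef
  have hμ : μ.IsAddHaarMeasure := Measure.isAddHaarMeasure_addHaarMeasure _
  have hfin : IsFiniteMeasure μ := ⟨isCompact_univ.measure_lt_top⟩
  have hpos : μ Set.univ ≠ 0 := fun hc => (Measure.IsOpenPosMeasure.open_pos (μ := μ) Set.univ isOpen_univ Set.univ_nonempty) hc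
  -- the complex-valued characters
  set f : ℕ → X → ℂ := fun n x => (AddCircle.toCircle (v n x) : ℂ) with hf
  have hcont : ∀ n, Continuous (f n) := fun n =>
    continuous_subtype_val.comp (AddCircle.continuous_toCircle.comp (v n).continuous)
  -- orthogonality: if v n ≠ 0 then ∫ f n = 0
  have horth : ∀ n, v n ≠ 0 → ∫ x, f n x ∂μ = 0 := by
    intro n hn
    obtain ⟨t, ht⟩ : ∃ t, v n t ≠ 0 := by
      by_contra hc
      push_neg at hc
      exact hn (ContinuousAddMonoidHom.ext fun x => hc x)
    have ht' : f n t ≠ 1 := by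
      intro hc
      apply ht
      have : AddCircle.toCircle (v n t) = AddCircle.toCircle (0 : 𝕋) := by
        apply Subtype.coe_injective
        simp only [hf] at hc
        simpa using hc
      exact AddCircle.injective_toCircle one_ne_zero this
    have key : ∫ x, f n x ∂μ = f n t * ∫ x, f n x ∂μ := by
      conv_lhs => rw [← integral_add_left_eq_self (μ := μ) (f n) t]
      have : ∀ x, f n (t + x) = f n t * f n x := by
        intro x
        simp [hf, map_add, AddCircle.toCircle_add]
      simp_rw [this]
      rw [integral_const_mul]
    have := key.symm
    rw [← sub_eq_zero] at this
    rw [← sub_one_mul] at this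
    rcases mul_eq_zero.mp this with h1 | h2
    · exact absurd (by linear_combination h1 : f n t = 1) ht'
    · exact h2
  -- dominated convergence
  have hlim : Tendsto (fun n => ∫ x, f n x ∂μ) atTop (𝓝 (∫ _x, (1 : ℂ) ∂μ)) := by
    apply tendsto_integral_of_dominated_convergence (fun _ => 1)
    · exact fun n => (hcont n).aestronglyMeasurable
    · exact integrable_const 1
    · intro n
      filter_upwards with x
      simp [hf, Circle.norm_coe]
    · filter_upwards with x
      have : Tendsto (fun n => f n x) atTop (𝓝 ((AddCircle.toCircle (0 : 𝕋)) : ℂ)) :=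
        (continuous_subtype_val.comp AddCircle.continuous_toCircle).continuousAt.tendsto.comp (h x)
      simpa using this
  have hconst : ∫ _x, (1 : ℂ) ∂μ = ((μ Set.univ).toReal : ℂ) := by
    simp [Measure.real_def]
  have hc0 : ((μ Set.univ).toReal : ℂ) ≠ 0 := by
    simp only [ne_eq, ofReal_eq_zero]
    exact ENNReal.toReal_ne_zero.mpr ⟨hpos, isCompact_univ.measure_lt_top.ne⟩
  rw [hconst] at hlim
  have hev : ∀ᶠ n in atTop, ∫ x, f n x ∂μ ≠ 0 := by
    have : {z : ℂ | z ≠ 0} ∈ 𝓝 ((μ Set.univ).toReal : ℂ) :=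
      isOpen_ne.mem_nhds hc0
    exact hlim this
  obtain ⟨N, hN⟩ := eventually_atTop.mp hev
  exact ⟨N, fun n hn => by_contra fun hne => hN n hn (horth n hne)⟩
end

section
/- Let X be a topological abelian group and H a dense subgroup of X. If X is autocharacterized, then H (with the subspace topology) is autocharacterized. -/
open Filter Topology

/-- A dense subgroup of an autocharacterized group is autocharacterized. -/
theorem dense_subgroup_autocharacterized (X : Type) [AddCommGroup X] [TopologicalSpace X]
    [IsTopologicalAddGroup X] (H : AddSubgroup X) (hd : Dense (H : Set X))
    (hX : ∃ v : ℕ → ContinuousAddMonoidHom X 𝕋,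
      (¬ ∃ N : ℕ, ∀ n ≥ N, v n = 0) ∧
        ∀ x : X, Tendsto (fun n => v n x) atTop (𝓝 0)) :
    ∃ u : ℕ → ContinuousAddMonoidHom H 𝕋,
      (¬ ∃ N : ℕ, ∀ n ≥ N, u n = 0) ∧
        ∀ h : H, Tendsto (fun n => u n h) atTop (𝓝 0) := by
  obtain ⟨v, hnz, hconv⟩ := hX
  refine ⟨fun n => (v n).comp ⟨H.subtype, continuous_subtype_val⟩, ?_, fun h => hconv h⟩
  intro ⟨N, hN⟩
  apply hnz
  refine ⟨N, fun n hn => ?_⟩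
  ext x
  have hx : ∀ y ∈ (H : Set X), v n y = 0 := by
    intro y hy
    have := congrFun (congrArg DFunLike.coe (hN n hn)) ⟨y, hy⟩
    exact this
  have : Set.EqOn (v n) (fun _ => (0 : 𝕋)) (H : Set X) := hx
  have := Continuous.ext_on hd (v n).continuous continuous_const this
  exact congrFun this x
end

section
/- Let X be a topological abelian group and H an autocharacterized subgroup of X which is a topological direct summand of X (X ≅ H × Z topologically for some subgroup Z). Then X is autocharacterized. -/
open Filter Topology

/-- If `H` is an autocharacterized topological direct summand of `X`, then `X` is
autocharacterized. -/
theorem summand_autocharacterized (X : Type) [AddCommGroup X] [TopologicalSpace X]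
    [IsTopologicalAddGroup X] (H Z : AddSubgroup X)
    (e : X ≃+ (H × Z)) (he : Continuous e) (he' : Continuous e.symm)
    (heH : ∀ h : H, e (h : X) = (h, 0))
    (hH : ∃ v : ℕ → ContinuousAddMonoidHom H 𝕋,
      (¬ ∃ N : ℕ, ∀ n ≥ N, v n = 0) ∧
        ∀ h : H, Tendsto (fun n => v n h) atTop (𝓝 0)) :
    ∃ w : ℕ → ContinuousAddMonoidHom X 𝕋,
      (¬ ∃ N : ℕ, ∀ n ≥ N, w n = 0) ∧
        ∀ x : X, Tendsto (fun n => w n x) atTop (𝓝 0) := by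
  obtain ⟨v, hv1, hv2⟩ := hH
  refine ⟨fun n => ⟨⟨⟨fun x => v n (e x).1, by simp⟩, by intro a b; simp⟩,
      (v n).continuous.comp (continuous_fst.comp he)⟩, ?_, ?_⟩
  · intro ⟨N, hN⟩
    exact hv1 ⟨N, fun n hn => by
      ext h
      have h1 : v n ((e (h : X)).1) = 0 :=
        congrArg (fun f : ContinuousAddMonoidHom X 𝕋 => f (h : X)) (hN n hn)
      simpa [heH h] using h1⟩
  · intro x
    exact hv2 (e x).1
end

section
/- For every natural number m ≥ 2 and every a ∈ T = R/Z with ‖a‖ < 1/m², there exists b ∈ T such that mb = a and ‖kb‖ > 1/m² for every integer k with 1 ≤ k < m. -/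
open Filter Topology

/-- Division trick in `𝕋`: every `a` with `‖a‖ < 1/m²` has an `m`-th divisor `b` all of
whose proper multiples `kb`, `1 ≤ k < m`, satisfy `‖kb‖ > 1/m²`. -/
theorem exists_good_division (m : ℕ) (hm : 2 ≤ m) (a : 𝕋)
    (ha : ‖a‖ < 1 / (m : ℝ) ^ 2) :
    ∃ b : 𝕋, m • b = a ∧ ∀ k : ℕ, 1 ≤ k → k < m → 1 / (m : ℝ) ^ 2 < ‖k • b‖ := by
  obtain ⟨r0, rfl⟩ := QuotientAddGroup.mk_surjective a
  set r : ℝ := r0 - round r0 with hr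
  have hmR : (2 : ℝ) ≤ (m : ℝ) := by exact_mod_cast hm
  have hm0 : (0 : ℝ) < m := by linarith
  have hra : ((r : ℝ) : 𝕋) = (r0 : 𝕋) := by
    rw [hr, sub_eq_add_neg]
    rw [AddCircle.coe_add]
    have : ((-(round r0 : ℝ) : ℝ) : 𝕋) = 0 := by
      rw [AddCircle.coe_eq_zero_iff]
      exact ⟨-round r0, by simp⟩
    rw [this, add_zero]
  have hnorm : ‖(r0 : 𝕋)‖ = |r| := by
    rw [AddCircle.norm_eq]; simp [hr]
  have habs : |r| < 1 / (m : ℝ) ^ 2 := hnorm ▸ ha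
  refine ⟨((r + 1) / m : ℝ), ?_, ?_⟩
  · rw [← AddCircle.coe_nsmul, nsmul_eq_mul]
    rw [mul_div_cancel₀ _ hm0.ne']
    rw [← hra, AddCircle.coe_add]
    simp [AddCircle.coe_eq_zero_iff]
  · intro k hk1 hkm
    rw [← AddCircle.coe_nsmul, nsmul_eq_mul]
    have hk : (k : ℝ) * ((r + 1) / m) = k / m + k * r / m := by ring
    rw [hk, AddCircle.coe_add]
    have h1 : (1 : ℝ) / m ≤ ‖((k / m : ℝ) : 𝕋)‖ := by
      rw [AddCircle.norm_eq]
      set n : ℤ := round ((1 : ℝ)⁻¹ * (k / m)) with hn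
      have hne : (k : ℤ) - n * m ≠ 0 := by
        intro h
        have : (m : ℤ) ∣ k := ⟨n, by linarith⟩
        have := Int.le_of_dvd (by exact_mod_cast hk1) this
        omega
      have h1le : (1 : ℝ) ≤ |(k : ℝ) - n * m| := by
        have : (1 : ℤ) ≤ |(k : ℤ) - n * m| := Int.one_le_abs hne
        calc (1:ℝ) ≤ |((k : ℤ) - n * m : ℤ)| := by exact_mod_cast this
          _ = |(k : ℝ) - n * m| := by push_cast; ring_nf
      have heq : |(k : ℝ) / m - n * 1| = |(k : ℝ) - n * m| / m := by
        rw [show (k:ℝ)/m - n*1 = ((k:ℝ) - n*m)/m by field_simp,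
          abs_div, abs_of_pos hm0]
      rw [heq]
      gcongr
    have h2 : ‖((k * r / m : ℝ) : 𝕋)‖ ≤ |(k : ℝ) * r / m| := by
      rw [AddCircle.norm_eq]
      have := round_le ((1:ℝ)⁻¹ * (k * r / m)) 0
      simpa using this
    have h3 : ‖((k / m : ℝ) : 𝕋)‖ - ‖((k * r / m : ℝ) : 𝕋)‖ ≤
        ‖((k / m : ℝ) : 𝕋) + ((k * r / m : ℝ) : 𝕋)‖ := by
      have := norm_add_le (((k / m : ℝ) : 𝕋) + ((k * r / m : ℝ) : 𝕋))
        (-((k * r / m : ℝ) : 𝕋))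
      simp at this
      linarith [this]
    have hkR : (k : ℝ) ≤ m - 1 := by
      have : (k : ℝ) + 1 ≤ m := by exact_mod_cast Nat.succ_le_of_lt hkm
      linarith
    have hk0 : (0 : ℝ) ≤ k := Nat.cast_nonneg k
    have h4 : |(k : ℝ) * r / m| < ((m : ℝ) - 1) / m ^ 3 := by
      rw [abs_div, abs_of_pos hm0, abs_mul, Nat.abs_cast]
      rw [div_lt_div_iff₀ hm0 (by positivity)]
      have hk' : (k : ℝ) * |r| ≤ (m - 1) * |r| :=
        mul_le_mul_of_nonneg_right hkR (abs_nonneg r)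
      have h6 : ((k : ℝ) * |r|) * m ^ 3 < ((m - 1) * (1 / m ^ 2)) * m ^ 3 := by
        apply mul_lt_mul_of_pos_right _ (by positivity)
        calc (k : ℝ) * |r| ≤ (m - 1) * |r| := hk'
          _ < (m - 1) * (1 / m ^ 2) := by
            apply mul_lt_mul_of_pos_left habs; linarith
      have h7 : ((m : ℝ) - 1) * (1 / m ^ 2) * m ^ 3 = (m - 1) * m := by
        field_simp
      linarith
    have h5 : 1 / (m : ℝ) ^ 2 < 1 / m - (m - 1) / m ^ 3 := by
      rw [div_sub_div _ _ hm0.ne' (by positivity), div_lt_div_iff₀ (by positivity) (by positivity)]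
      nlinarith [mul_pos (pow_pos hm0 3) (pow_pos (show (0:ℝ) < (m:ℝ) - 1 by linarith) 2)]
    calc 1 / (m : ℝ) ^ 2 < 1 / m - (m - 1) / m ^ 3 := h5
      _ ≤ ‖((k / m : ℝ) : 𝕋)‖ - ‖((k * r / m : ℝ) : 𝕋)‖ := by linarith
      _ ≤ _ := h3
end

section
/- Let X be a topological abelian group and H a subgroup of X. Then H is of the form n_v(X) = ⋂_n ker v_n for some sequence v of continuous characters of X if and only if H is closed and there exists a continuous injective homomorphism from X/H (with the quotient topology) into T^N. -/
open Filter Topology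

/-- `H` is `N`-characterized iff it is closed and `X/H` injects continuously into `𝕋^ℕ`. -/
theorem N_characterized_iff (X : Type) [AddCommGroup X] [TopologicalSpace X]
    [IsTopologicalAddGroup X] (H : AddSubgroup X) :
    (∃ v : ℕ → ContinuousAddMonoidHom X 𝕋, (H : Set X) = ⋂ n : ℕ, (v n) ⁻¹' {0}) ↔
      (IsClosed (H : Set X) ∧
        ∃ f : (X ⧸ H) →+ (ℕ → 𝕋), Continuous f ∧ Function.Injective f) := by
  constructor
  · rintro ⟨v, hv⟩
    have hmem : ∀ x : X, x ∈ H ↔ ∀ n : ℕ, v n x = 0 := by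
      intro x
      have h := Set.ext_iff.mp hv x
      simp only [SetLike.mem_coe, Set.mem_iInter, Set.mem_preimage,
        Set.mem_singleton_iff] at h
      exact h
    constructor
    · rw [hv]
      exact isClosed_iInter fun n =>
        (isClosed_singleton).preimage (v n).continuous
    · let φ : X →+ (ℕ → 𝕋) :=
        { toFun := fun x n => v n x
          map_zero' := by funext n; simp
          map_add' := fun a b => by funext n; simp }
      have hφH : ∀ x ∈ H, φ x = 0 := by
        intro x hx
        funext n
        exact (hmem x).mp hx n
      refine ⟨QuotientAddGroup.lift H φ hφH, ?_, ?_⟩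
      · rw [(QuotientAddGroup.isQuotientMap_mk H).continuous_iff]
        exact continuous_pi fun n => (v n).continuous
      · intro a b hab
        induction a using QuotientAddGroup.induction_on with
        | H a =>
        induction b using QuotientAddGroup.induction_on with
        | H b =>
        rw [QuotientAddGroup.eq]
        refine (hmem _).mpr fun n => ?_
        have : φ a = φ b := hab
        have h2 : v n a = v n b := congrFun this n
        simp [h2]
  · rintro ⟨-, f, hf, hinj⟩
    refine ⟨fun n => ⟨(Pi.evalAddMonoidHom (fun _ : ℕ => 𝕋) n).comp
      (f.comp (QuotientAddGroup.mk' H)), ?_⟩, ?_⟩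
    · exact (continuous_apply n).comp (hf.comp QuotientAddGroup.continuous_mk)
    · ext x
      simp only [Set.mem_iInter, Set.mem_preimage, Set.mem_singleton_iff, SetLike.mem_coe]
      constructor
      · intro hx n
        have : ((QuotientAddGroup.mk' H) x : X ⧸ H) = 0 :=
          (QuotientAddGroup.eq_zero_iff x).mpr hx
        show f ((QuotientAddGroup.mk' H) x) n = 0
        rw [this, map_zero]
        rfl
      · intro hx
        have : f ((QuotientAddGroup.mk' H) x) = 0 := funext fun n => hx n
        have h0 : ((QuotientAddGroup.mk' H) x : X ⧸ H) = 0 := hinj (by simpa using this)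
        simpa [QuotientAddGroup.eq_zero_iff] using h0
end
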